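/- arXiv:1605.03546 — 4 statements merged into one kernel-verified Lean document; each statement's English description precedes it below -/
import Mathlib

section
/- There exists a family of switch graphs G_n with n+2 vertices, an origin o, and a destination d, such that the run from o terminates at d but traverses at least 2^n edges. -/
open scoped Classical

/-- A switch graph: every vertex has an even successor `s0 v` and an odd successor `s1 v`. -/
structure SwitchGraph (V : Type) where
  s0 : V → V
  s1 : V → V

namespace SwitchGraph

variable {V : Type}

/-- The successor of `v` along the edge of parity `b` (`false` = even, `true` = odd). -/
def succ (G : SwitchGraph V) (v : V) (b : Bool) : V :=
  if b then G.s1 v else G.s0 v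

/-- One step of the run: move to the currently active successor and flip the switch. -/
def step [DecidableEq V] (G : SwitchGraph V) (p : V × (V → Bool)) : V × (V → Bool) :=
  (G.succ p.1 (p.2 p.1), Function.update p.2 p.1 (!p.2 p.1))

/-- The state of the run after `n` steps, starting at `o` with all switches even,
stopping (freezing) upon reaching `d`. -/
def run [DecidableEq V] (G : SwitchGraph V) (o d : V) (n : ℕ) : V × (V → Bool) :=
  (fun p => if p.1 = d then p else G.step p)^[n] (o, fun _ => false)

/-- The run from `o` terminates at `d`. -/
def Terminates [DecidableEq V] (G : SwitchGraph V) (o d : V) : Prop :=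
  ∃ n, (G.run o d n).1 = d

/-- Number of traversals of the outgoing edge of `v` of parity `b` during
the first `N` steps of the run. -/
def traversals [DecidableEq V] (G : SwitchGraph V) (o d : V) (N : ℕ) (v : V) (b : Bool) : ℕ :=
  ((Finset.range N).filter
    (fun n => (G.run o d n).1 = v ∧ v ≠ d ∧ (G.run o d n).2 v = b)).card

/-- Total weight on edges leaving `v`. -/
def outflow {M : Type} [AddCommMonoid M] (x : V → Bool → M) (v : V) : M :=
  x v false + x v true

/-- Total weight on edges entering `v`. -/
def inflow [Fintype V] [DecidableEq V] (G : SwitchGraph V) {M : Type} [AddCommMonoid M]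
    (x : V → Bool → M) (v : V) : M :=
  ∑ u : V, ∑ b : Bool, if G.succ u b = v then x u b else 0

/-- A switching flow: flow conservation of value 1 from `o` to `d`, together with the
balancing condition `x v true ≤ x v false ≤ x v true + 1` at every vertex. -/
def IsSwitchingFlow [Fintype V] [DecidableEq V] (G : SwitchGraph V) (o d : V)
    (x : V → Bool → ℕ) : Prop :=
  (∀ v, outflow x v + (if v = d then 1 else 0) = G.inflow x v + (if v = o then 1 else 0)) ∧
  (∀ v, x v true ≤ x v false ∧ x v false ≤ x v true + 1)

/-- The edge relation of the underlying directed graph `(V, E)`. -/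
def stepRel (G : SwitchGraph V) (a b : V) : Prop :=
  G.s0 a = b ∨ G.s1 a = b

/-- A dead end: a vertex with no directed path to `d` in `(V, E)`. -/
def DeadEnd (G : SwitchGraph V) (d w : V) : Prop :=
  ¬ Relation.ReflTransGen G.stepRel w d

/-- There is a directed walk of length `k` from `w` to `d` in `(V, E)`. -/
def Chain (G : SwitchGraph V) (w d : V) (k : ℕ) : Prop :=
  ∃ f : ℕ → V, f 0 = w ∧ f k = d ∧ ∀ i < k, G.stepRel (f i) (f (i + 1))

end SwitchGraph

open SwitchGraph

namespace Counter

def G (n : ℕ) : SwitchGraph (Fin (n+2)) where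
  s0 v := if v.val = 0 then ⟨1, by omega⟩ else if v.val = n+1 then v else ⟨0, by omega⟩
  s1 v := ⟨min (v.val+1) (n+1), by omega⟩

def o (n : ℕ) : Fin (n+2) := ⟨0, by omega⟩
def d (n : ℕ) : Fin (n+2) := ⟨n+1, by omega⟩

/-- potential function: equals the time elapsed along the run. -/
def W (n : ℕ) (s : Fin (n+2) × (Fin (n+2) → Bool)) : ℤ :=
  (∑ i : Fin n, if s.2 ⟨i.val+1, by omega⟩ then (3*2^i.val - 1 : ℤ) else 0)
  + (if s.1.val = 0 then 0 else 3*2^(s.1.val-1) - 2)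

lemma sum_update_zero (n : ℕ) (b : Fin (n+2) → Bool) (v : Fin (n+2)) (hv : v.val = 0) (t : Bool) :
    (∑ i : Fin n,
        if Function.update b v t ⟨i.val+1, by omega⟩ then (3*2^i.val - 1 : ℤ) else 0)
      = ∑ i : Fin n, if b ⟨i.val+1, by omega⟩ then (3*2^i.val - 1 : ℤ) else 0 := by
  refine Finset.sum_congr rfl fun i _ => ?_
  rw [Function.update_of_ne]
  intro he
  have := congrArg Fin.val he
  simp [hv] at this

lemma sum_update (n : ℕ) (b : Fin (n+2) → Bool) (v : Fin (n+2)) (t : Bool)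
    (h1 : 1 ≤ v.val) (h2 : v.val ≤ n) :
    (∑ i : Fin n,
        if Function.update b v t ⟨i.val+1, by omega⟩ then (3*2^i.val - 1 : ℤ) else 0)
      = (∑ i : Fin n, if b ⟨i.val+1, by omega⟩ then (3*2^i.val - 1 : ℤ) else 0)
        + ((if t then (3*2^(v.val-1) - 1 : ℤ) else 0)
            - (if b v then (3*2^(v.val-1) - 1 : ℤ) else 0)) := by
  have key : ∀ i ∈ Finset.univ (α := Fin n),
      (if Function.update b v t ⟨i.val+1, by omega⟩ then (3*2^i.val - 1 : ℤ) else 0)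
        = (if b ⟨i.val+1, by omega⟩ then (3*2^i.val - 1 : ℤ) else 0)
          + (if i = (⟨v.val - 1, by omega⟩ : Fin n) then
              ((if t then (3*2^(v.val-1) - 1 : ℤ) else 0)
                - (if b v then (3*2^(v.val-1) - 1 : ℤ) else 0)) else 0) := by
    intro i _
    by_cases hiv : i = (⟨v.val - 1, by omega⟩ : Fin n)
    · subst hiv
      have hv : (⟨(⟨v.val - 1, by omega⟩ : Fin n).val + 1, by omega⟩ : Fin (n+2)) = v := by
        apply Fin.ext; simp; omega
      rw [hv, Function.update_self, if_pos rfl]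
      have : ((⟨v.val - 1, by omega⟩ : Fin n)).val = v.val - 1 := rfl
      rw [this]
      ring
    · have hne : (⟨i.val+1, by omega⟩ : Fin (n+2)) ≠ v := by
        intro he
        have h' := congrArg Fin.val he
        simp at h'
        exact hiv (Fin.ext (by simp; omega))
      rw [Function.update_of_ne hne, if_neg hiv, add_zero]
  rw [Finset.sum_congr rfl key, Finset.sum_add_distrib,
    Finset.sum_ite_eq' Finset.univ (⟨v.val - 1, by omega⟩ : Fin n)]
  rw [if_pos (Finset.mem_univ _)]

lemma step_W (n : ℕ) (s : Fin (n+2) × (Fin (n+2) → Bool)) (h : s.1.val ≠ n+1) :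
    W n ((G n).step s) = W n s + 1 := by
  obtain ⟨v, b⟩ := s
  simp only at h
  by_cases h0 : v.val = 0
  · have hmin : min 1 (n+1) = 1 := by omega
    have hsucc : (G n).succ v (b v) = ⟨1, by omega⟩ := by
      cases hb : b v <;>
        · apply Fin.ext
          simp [G, SwitchGraph.succ, hb, h0, hmin, show v = 0 from Fin.ext h0]
    show W n ((G n).succ v (b v), Function.update b v (!b v)) = _
    rw [hsucc]
    simp only [W]
    rw [sum_update_zero n b v h0]
    rw [if_pos h0, if_neg (by norm_num : ¬(1:ℕ) = 0)]
    norm_num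
  · have h1 : 1 ≤ v.val := by omega
    have h2 : v.val ≤ n := by omega
    cases hb : b v
    · have hsucc : (G n).succ v (b v) = o n := by
        apply Fin.ext
        simp [G, SwitchGraph.succ, o, hb, h0, h, show ¬ v = 0 from fun e => h0 (by simp [e])]
      show W n ((G n).succ v (b v), Function.update b v (!b v)) = _
      rw [hsucc, hb]
      simp only [W, o, Bool.not_false]
      rw [sum_update n b v true h1 h2]
      simp only [hb, Bool.not_false, if_true, if_false, if_pos rfl, if_neg h0]
      norm_num
      ring
    · have hsucc : (G n).succ v (b v) = ⟨v.val + 1, by omega⟩ := by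
        apply Fin.ext
        simp [G, SwitchGraph.succ, hb]
        omega
      show W n ((G n).succ v (b v), Function.update b v (!b v)) = _
      rw [hsucc, hb]
      simp only [W, Bool.not_true]
      rw [sum_update n b v false h1 h2]
      simp only [hb, if_false, if_true, Bool.not_true, if_neg h0]
      have hvne : ¬ (v.val + 1 = 0) := by omega
      rw [if_neg hvne]
      have hpow : (2:ℤ)^(v.val + 1 - 1) = 2 * 2^(v.val - 1) := by
        have e1 : v.val + 1 - 1 = (v.val - 1) + 1 := by omega
        rw [e1, pow_succ]
        ring
      rw [hpow]
      norm_num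
      ring

lemma run_succ (n : ℕ) (m : ℕ) :
    (G n).run (o n) (d n) (m+1) =
      (if ((G n).run (o n) (d n) m).1 = d n then (G n).run (o n) (d n) m
        else (G n).step ((G n).run (o n) (d n) m)) := by
  simp only [SwitchGraph.run, Function.iterate_succ_apply']
  split_ifs with h <;> simp [h]

lemma W_run (n : ℕ) (m : ℕ) :
    ((G n).run (o n) (d n) m).1 = d n ∨ W n ((G n).run (o n) (d n) m) = m := by
  induction m with
  | zero =>
    right
    simp [SwitchGraph.run, W, o]
  | succ m ih =>
    by_cases hd : ((G n).run (o n) (d n) m).1 = d n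
    · left
      rw [run_succ, if_pos hd]
      exact hd
    · right
      rcases ih with hh | hh
      · exact absurd hh hd
      rw [run_succ, if_neg hd, step_W n _ (fun he => hd (Fin.ext (by simpa [d] using he))), hh]
      push_cast
      ring

lemma geom (k : ℕ) : ∑ i ∈ Finset.range k, (2:ℤ)^i = 2^k - 1 := by
  induction k with
  | zero => simp
  | succ k ih => rw [Finset.sum_range_succ, ih]; ring

lemma one_le_pow2 (k : ℕ) : (1:ℤ) ≤ 2^k := by exact_mod_cast Nat.one_le_two_pow (n := k)

lemma W_le (n : ℕ) (s : Fin (n+2) × (Fin (n+2) → Bool)) : W n s ≤ 6 * 2^n - 5 := by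
  have hsum : (∑ i : Fin n, if s.2 ⟨i.val+1, by omega⟩ then (3*2^i.val - 1 : ℤ) else 0)
      ≤ ∑ i : Fin n, (3:ℤ) * 2^i.val := by
    refine Finset.sum_le_sum fun i _ => ?_
    have : (0:ℤ) < 2^i.val := by positivity
    split <;> linarith
  have hg : ∑ i : Fin n, (3:ℤ) * 2^i.val = 3 * (2^n - 1) := by
    rw [Fin.sum_univ_eq_sum_range (fun i => (3:ℤ) * 2^i) n, ← Finset.mul_sum, geom]
  have hw : (if s.1.val = 0 then (0:ℤ) else 3*2^(s.1.val-1) - 2) ≤ 3 * 2^n - 2 := by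
    have hpow : (2:ℤ)^(s.1.val - 1) ≤ 2^n := by
      apply pow_le_pow_right₀ (by norm_num)
      have := s.1.isLt
      omega
    have := one_le_pow2 n
    split <;> linarith
  have := hsum.trans hg.le
  unfold W
  linarith

lemma W_ge (n : ℕ) (s : Fin (n+2) × (Fin (n+2) → Bool)) (h : s.1 = d n) :
    (3 * 2^n - 2 : ℤ) ≤ W n s := by
  have hsum : (0:ℤ) ≤ ∑ i : Fin n, if s.2 ⟨i.val+1, by omega⟩ then (3*2^i.val - 1 : ℤ) else 0 := by
    refine Finset.sum_nonneg fun i _ => ?_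
    have := one_le_pow2 i.val
    split <;> linarith
  have hval : s.1.val = n + 1 := by rw [h]; rfl
  unfold W
  rw [hval, if_neg (by omega : ¬ (n + 1 = 0))]
  simp only [Nat.add_sub_cancel]
  linarith

theorem main (n : ℕ) :
    (G n).Terminates (o n) (d n) ∧ ∀ m < 2 ^ n, ((G n).run (o n) (d n) m).1 ≠ d n := by
  have h2 : (1:ℤ) ≤ 2^n := one_le_pow2 n
  constructor
  · refine ⟨6 * 2^n, ?_⟩
    rcases W_run n (6 * 2^n) with h | h
    · exact h
    · exfalso
      have h1 := W_le n ((G n).run (o n) (d n) (6 * 2^n))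
      rw [h] at h1
      push_cast at h1
      linarith
  · intro m hm hd
    have hex : ∃ k, ((G n).run (o n) (d n) k).1 = d n := ⟨m, hd⟩
    have hk0 := Nat.find_spec hex
    have hk0le : Nat.find hex ≤ m := Nat.find_min' hex hd
    have hk0pos : Nat.find hex ≠ 0 := by
      intro h0
      rw [h0] at hk0
      have : (o n).val = (d n).val := congrArg Fin.val hk0
      simp [o, d] at this
    obtain ⟨k, hk⟩ : ∃ k, Nat.find hex = k + 1 := ⟨Nat.find hex - 1, by omega⟩
    have hkd : ((G n).run (o n) (d n) k).1 ≠ d n := Nat.find_min hex (by omega)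
    have hWk : W n ((G n).run (o n) (d n) k) = k := (W_run n k).resolve_left hkd
    have hstep : (G n).run (o n) (d n) (k+1) = (G n).step ((G n).run (o n) (d n) k) := by
      rw [run_succ, if_neg hkd]
    have hW1 : W n ((G n).run (o n) (d n) (k+1)) = k + 1 := by
      rw [hstep, step_W n _ (fun he => hkd (Fin.ext (by simpa [d] using he))), hWk]
    have hged : ((G n).run (o n) (d n) (k+1)).1 = d n := by rw [← hk]; exact hk0
    have hge := W_ge n _ hged
    rw [hW1] at hge
    have hmc : (m:ℤ) < 2^n := by exact_mod_cast hm
    have : (k:ℤ) + 1 ≤ m := by exact_mod_cast (by omega : k + 1 ≤ m)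
    linarith

end Counter

/-- There is a family of switch graphs with `n + 2` vertices on which the run terminates
but traverses at least `2^n` edges. -/
theorem stmt2 (n : ℕ) :
    ∃ (G : SwitchGraph (Fin (n + 2))) (o d : Fin (n + 2)),
      G.Terminates o d ∧ ∀ m < 2 ^ n, (G.run o d m).1 ≠ d :=
  ⟨Counter.G n, Counter.o n, Counter.d n, Counter.main n⟩
end

section
/- If the run from o terminates at d, then the run profile — the function x : E → ℕ assigning to each edge the number of times it is traversed during the run — is a switching flow: it satisfies flow conservation with source o and sink d of value 1, and for every vertex v, 0 ≤ x(v, s₁(v)) ≤ x(v, s₀(v)) ≤ x(v, s₁(v)) + 1. -/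
open scoped Classical

namespace SwitchGraph

variable {V : Type} [Fintype V] [DecidableEq V]

lemma run_succ' (G : SwitchGraph V) (o d : V) (n : ℕ) :
    G.run o d (n+1) = if (G.run o d n).1 = d then G.run o d n else G.step (G.run o d n) := by
  unfold run
  rw [Function.iterate_succ_apply']

lemma traversals_succ' (G : SwitchGraph V) (o d : V) (n : ℕ) (v : V) (b : Bool) :
    G.traversals o d (n+1) v b
      = G.traversals o d n v b
        + (if (G.run o d n).1 = v ∧ v ≠ d ∧ (G.run o d n).2 v = b then 1 else 0) := by
  unfold traversals
  rw [Finset.range_add_one, Finset.filter_insert]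
  split
  · rw [Finset.card_insert_of_notMem (by simp)]
  · simp

lemma invariant' (G : SwitchGraph V) (o d : V) (n : ℕ) :
    (∀ v, outflow (G.traversals o d n) v + (if v = (G.run o d n).1 then 1 else 0)
        = G.inflow (G.traversals o d n) v + (if v = o then 1 else 0)) ∧
    (∀ v, G.traversals o d n v false
        = G.traversals o d n v true + (if (G.run o d n).2 v = true then 1 else 0)) := by
  induction n with
  | zero =>
    refine ⟨fun v => ?_, fun v => ?_⟩
    · have h0 : G.traversals o d 0 = fun _ _ => 0 := by
        funext w b; simp [traversals]
      simp [h0, outflow, inflow, run]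
      by_cases h : v = o <;> simp [h]
    · simp [traversals, run]
      rfl
  | succ n ih =>
    obtain ⟨ih1, ih2⟩ := ih
    by_cases hd : (G.run o d n).1 = d
    · have hrun : G.run o d (n+1) = G.run o d n := by rw [run_succ', if_pos hd]
      have hx : G.traversals o d (n+1) = G.traversals o d n := by
        funext v b
        rw [traversals_succ', if_neg, Nat.add_zero]
        rintro ⟨h1, h2, -⟩
        exact h2 (h1.symm.trans hd)
      rw [hx, hrun]
      exact ⟨ih1, ih2⟩
    · have hrun : G.run o d (n+1)
          = (G.succ (G.run o d n).1 ((G.run o d n).2 (G.run o d n).1),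
             Function.update (G.run o d n).2 (G.run o d n).1
               (!(G.run o d n).2 (G.run o d n).1)) := by
        rw [run_succ', if_neg hd]; rfl
      have hx : ∀ v β, G.traversals o d (n+1) v β
          = G.traversals o d n v β
            + (if v = (G.run o d n).1 ∧ β = (G.run o d n).2 (G.run o d n).1 then 1 else 0) := by
        intro v β
        rw [traversals_succ']
        congr 1
        apply if_congr _ rfl rfl
        constructor
        · rintro ⟨h1, h2, h3⟩
          exact ⟨h1.symm, by rw [← h3, h1]⟩
        · rintro ⟨rfl, rfl⟩
          exact ⟨rfl, hd, rfl⟩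
      refine ⟨fun v => ?_, fun v => ?_⟩
      · have e1 : outflow (G.traversals o d (n+1)) v
            = outflow (G.traversals o d n) v + (if v = (G.run o d n).1 then 1 else 0) := by
          unfold outflow
          rw [hx v false, hx v true]
          by_cases hv : v = (G.run o d n).1 <;>
            cases h : (G.run o d n).2 (G.run o d n).1 <;> simp [hv, h] <;> omega
        have e2 : G.inflow (G.traversals o d (n+1)) v
            = G.inflow (G.traversals o d n) v
              + (if G.succ (G.run o d n).1 ((G.run o d n).2 (G.run o d n).1) = v
                  then 1 else 0) := by
          unfold inflow
          have key : ∀ u (β : Bool),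
              (if G.succ u β = v then G.traversals o d (n+1) u β else 0)
                = (if G.succ u β = v then G.traversals o d n u β else 0)
                  + (if (u = (G.run o d n).1 ∧ β = (G.run o d n).2 (G.run o d n).1)
                        ∧ G.succ u β = v then 1 else 0) := by
            intro u β
            rw [hx]
            by_cases h2 : u = (G.run o d n).1 ∧ β = (G.run o d n).2 (G.run o d n).1 <;>
              simp [h2] <;> split_ifs <;> simp
          simp only [key, Finset.sum_add_distrib]
          congr 1
          rw [Fintype.sum_eq_single ((G.run o d n).1)]
          · rw [Fintype.sum_eq_single ((G.run o d n).2 (G.run o d n).1)]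
            · simp
            · intro β hβ; simp [hβ]
          · intro u hu; simp [hu]
        have hB : (if v = (G.run o d (n+1)).1 then (1:ℕ) else 0)
            = (if G.succ (G.run o d n).1 ((G.run o d n).2 (G.run o d n).1) = v
                then 1 else 0) := by
          rw [hrun]
          simp [eq_comm]
        have key := ih1 v
        rw [e1, e2, hB]
        omega
      · rw [hx v false, hx v true, hrun]
        simp only [Function.update_apply]
        by_cases hv : v = (G.run o d n).1
        · subst hv
          have hv2 := ih2 (G.run o d n).1
          cases h : (G.run o d n).2 (G.run o d n).1 <;> simp [h] at hv2 ⊢ <;> omega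
        · have hv2 := ih2 v
          simp [hv]
          split_ifs at hv2 ⊢ <;> omega

end SwitchGraph

open SwitchGraph

/-- If the run terminates at `d`, its run profile is a switching flow. -/
theorem stmt3 {V : Type} [Fintype V] [DecidableEq V] (G : SwitchGraph V) (o d : V)
    (hod : o ≠ d) (N : ℕ) (hN : (G.run o d N).1 = d) :
    G.IsSwitchingFlow o d (G.traversals o d N) := by
  obtain ⟨h1, h2⟩ := invariant' G o d N
  refine ⟨fun v => ?_, fun v => ?_⟩
  · have h := h1 v
    rw [hN] at h
    exact h
  · have h := h2 v
    refine ⟨?_, ?_⟩ <;> split_ifs at h <;> omega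
end

section
/- Let e = (v, w) be a hopeful edge of desperation k, i.e., the shortest directed path from w to d in (V, E) has length k. Then the run from o traverses e at most 2^{k+1} − 1 times (even if the run never terminates). -/
open scoped Classical

open SwitchGraph

section Aux

variable {V : Type} [DecidableEq V] (G : SwitchGraph V) (o d : V)

/-- Number of visits to `w` among the first `M` states of the run. -/
def visAux (w : V) (M : ℕ) : ℕ :=
  ((Finset.range M).filter (fun n => (G.run o d n).1 = w)).card

/-- Number of steps `n < N` at which the run is at `v ≠ d` and about to move to `w`. -/
def cntAux (v w : V) (N : ℕ) : ℕ :=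
  ((Finset.range N).filter
    (fun n => (G.run o d n).1 = v ∧ v ≠ d ∧ G.succ v ((G.run o d n).2 v) = w)).card

lemma run_succ_eq (n : ℕ) :
    G.run o d (n + 1) =
      if (G.run o d n).1 = d then G.run o d n else G.step (G.run o d n) := by
  unfold SwitchGraph.run
  rw [Function.iterate_succ_apply']

lemma run_frozen {n : ℕ} (h : (G.run o d n).1 = d) :
    ∀ m, n ≤ m → (G.run o d m).1 = d := by
  intro m hm
  induction m with
  | zero => exact (Nat.le_zero.mp hm ▸ h :)
  | succ m ih =>
    rcases Nat.lt_or_ge n (m + 1) with h' | h'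
    · have hd : (G.run o d m).1 = d := ih (by omega)
      rw [run_succ_eq, if_pos hd]; exact hd
    · have : n = m + 1 := by omega
      exact this ▸ h

lemma key (w : V) (hwd : w ≠ d) (M : ℕ) :
    (G.run o d M).2 w = decide (visAux G o d w M % 2 = 1) ∧
    G.traversals o d M w false = (visAux G o d w M + 1) / 2 ∧
    G.traversals o d M w true = visAux G o d w M / 2 := by
  induction M with
  | zero =>
    have hv0 : visAux G o d w 0 = 0 :=
      Nat.le_zero.mp (Finset.card_le_card (Finset.filter_subset _ (Finset.range 0)))
    have ht0 : ∀ b, G.traversals o d 0 w b = 0 := fun b =>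
      Nat.le_zero.mp (Finset.card_le_card (Finset.filter_subset _ (Finset.range 0)))
    rw [hv0, ht0, ht0]
    exact ⟨rfl, rfl, rfl⟩
  | succ M ih =>
    obtain ⟨h1, h2, h3⟩ := ih
    have hins : ∀ (p : ℕ → Prop) [DecidablePred p],
        ((Finset.range (M + 1)).filter p).card =
          ((Finset.range M).filter p).card + (if p M then 1 else 0) := by
      intro p _
      rw [Finset.range_add_one, Finset.filter_insert]
      split
      · rw [Finset.card_insert_of_notMem (by simp)]
      · simp
    have hv : visAux G o d w (M + 1) =
        visAux G o d w M + (if (G.run o d M).1 = w then 1 else 0) := by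
      unfold visAux; exact hins _
    have ht : ∀ b, G.traversals o d (M + 1) w b =
        G.traversals o d M w b +
          (if (G.run o d M).1 = w ∧ w ≠ d ∧ (G.run o d M).2 w = b then 1 else 0) := by
      intro b; unfold SwitchGraph.traversals; exact hins _
    by_cases hMw : (G.run o d M).1 = w
    · -- visit at time M
      have hMnd : (G.run o d M).1 ≠ d := by rw [hMw]; exact hwd
      have hrun : G.run o d (M + 1) = G.step (G.run o d M) := by
        rw [run_succ_eq, if_neg hMnd]
      have hsw : (G.run o d (M + 1)).2 w = !((G.run o d M).2 w) := by
        rw [hrun]; simp [SwitchGraph.step, hMw]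
      set c := visAux G o d w M with hc
      have hv' : visAux G o d w (M + 1) = c + 1 := by rw [hv, if_pos hMw]
      rcases Nat.mod_two_eq_zero_or_one c with hpar | hpar
      · have hb : (G.run o d M).2 w = false := by rw [h1]; simp [hpar]
        refine ⟨?_, ?_, ?_⟩
        · rw [hsw, hb, hv']
          have : (c + 1) % 2 = 1 := by omega
          simp [this]
        · rw [ht, h2, hv', if_pos ⟨hMw, hwd, hb⟩]; omega
        · rw [ht, h3, hv', if_neg (by simp [hb])]; omega
      · have hb : (G.run o d M).2 w = true := by rw [h1]; simp [hpar]
        refine ⟨?_, ?_, ?_⟩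
        · rw [hsw, hb, hv']
          have : (c + 1) % 2 = 0 := by omega
          simp [this]
        · rw [ht, h2, hv', if_neg (by simp [hb])]; omega
        · rw [ht, h3, hv', if_pos ⟨hMw, hwd, hb⟩]; omega
    · -- no visit at time M
      have hsw : (G.run o d (M + 1)).2 w = (G.run o d M).2 w := by
        rw [run_succ_eq]
        split
        · rfl
        · show (Function.update (G.run o d M).2 (G.run o d M).1 _) w = _
          exact Function.update_of_ne (fun h => hMw h.symm) _ _
      have hv' : visAux G o d w (M + 1) = visAux G o d w M := by
        rw [hv, if_neg hMw]; omega
      refine ⟨by rw [hsw, hv', h1], ?_, ?_⟩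
      · rw [ht, hv', h2, if_neg (by tauto)]; omega
      · rw [ht, hv', h3, if_neg (by tauto)]; omega
lemma vis_le_two_trav (w : V) (hwd : w ≠ d) (b : Bool) (M : ℕ) :
    visAux G o d w M ≤ 2 * G.traversals o d M w b + 1 := by
  obtain ⟨-, h2, h3⟩ := key G o d w hwd M
  cases b
  · rw [h2]; omega
  · rw [h3]; omega

lemma cnt_le_vis (v w : V) (N : ℕ) : cntAux G o d v w N ≤ visAux G o d w (N + 1) := by
  unfold cntAux visAux
  apply Finset.card_le_card_of_injOn (fun n => n + 1)
  · intro n hn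
    simp only [Finset.coe_filter, Set.mem_setOf_eq, Finset.mem_coe, Finset.mem_filter, Finset.mem_range] at hn ⊢
    obtain ⟨hn, h1, h2, h3⟩ := hn
    refine ⟨by omega, ?_⟩
    have hnd : (G.run o d n).1 ≠ d := by rw [h1]; exact h2
    rw [run_succ_eq, if_neg hnd]
    show G.succ (G.run o d n).1 ((G.run o d n).2 (G.run o d n).1) = w
    rw [h1]; exact h3
  · intro a _ b _ h
    simpa using h

lemma trav_le_cnt (w w' : V) (b : Bool) (hb : G.succ w b = w') (M : ℕ) :
    G.traversals o d M w b ≤ cntAux G o d w w' M := by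
  unfold SwitchGraph.traversals cntAux
  apply Finset.card_le_card
  intro n hn
  simp only [Finset.mem_filter] at hn ⊢
  obtain ⟨hn, h1, h2, h3⟩ := hn
  exact ⟨hn, h1, h2, by rw [h3]; exact hb⟩

lemma main_bound : ∀ (k : ℕ) (w : V), G.Chain w d k → (∀ j < k, ¬ G.Chain w d j) →
    ∀ (v : V) (N : ℕ), cntAux G o d v w N ≤ 2 ^ (k + 1) - 1 := by
  intro k
  induction k with
  | zero =>
    intro w hchain _ v N
    obtain ⟨f, hf0, hfk, -⟩ := hchain
    have hwd : w = d := by rw [← hf0, hfk]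
    have h1le : cntAux G o d v w N ≤ 1 := by
      unfold cntAux
      apply Finset.card_le_one.mpr
      intro a ha b hb
      simp only [Finset.mem_filter, Finset.mem_range] at ha hb
      rw [hwd] at ha hb
      by_contra hne
      have frozen : ∀ x y : ℕ, x < y →
          (G.run o d x).1 = v → v ≠ d → G.succ v ((G.run o d x).2 v) = d →
          (G.run o d y).1 = v → False := by
        intro x y hxy h1 h2 h3 h4
        have hstep : (G.run o d (x + 1)).1 = d := by
          rw [run_succ_eq, if_neg (h1 ▸ h2)]
          show G.succ (G.run o d x).1 ((G.run o d x).2 (G.run o d x).1) = d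
          rw [h1]; exact h3
        have := run_frozen G o d hstep y (by omega)
        exact h2 (by rw [← h4]; exact this)
      rcases Nat.lt_or_ge a b with hab | hab
      · exact frozen a b hab ha.2.1 ha.2.2.1 ha.2.2.2 hb.2.1
      · exact frozen b a (by omega) hb.2.1 hb.2.2.1 hb.2.2.2 ha.2.1
    omega
  | succ k ih =>
    intro w hchain hmin v N
    have hwd : w ≠ d := by
      intro h
      exact hmin 0 (Nat.succ_pos k) ⟨fun _ => w, rfl, h, by omega⟩
    obtain ⟨f, hf0, hfk, hfs⟩ := hchain
    have hstep01 : G.stepRel w (f 1) := hf0 ▸ hfs 0 (Nat.succ_pos k)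
    set w' : V := f 1 with hw'
    have hchain' : G.Chain w' d k :=
      ⟨fun i => f (i + 1), rfl, hfk, fun i hi => hfs (i + 1) (by omega)⟩
    have hmin' : ∀ j < k, ¬ G.Chain w' d j := by
      intro j hj hcj
      obtain ⟨g, hg0, hgk, hgs⟩ := hcj
      refine hmin (j + 1) (by omega)
        ⟨fun i => if i = 0 then w else g (i - 1), rfl, by simp [hgk], ?_⟩
      intro i hi
      rcases Nat.eq_zero_or_pos i with h0 | h0
      · subst h0
        simpa [hg0] using hstep01
      · have h1 : i ≠ 0 := by omega
        have h2 : i + 1 ≠ 0 := by omega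
        simp only [h1, h2, if_false]
        rw [show i + 1 - 1 = i from by omega]
        have := hgs (i - 1) (by omega)
        rwa [show i - 1 + 1 = i from by omega] at this
    have hb' : ∃ b : Bool, G.succ w b = w' := by
      rcases hstep01 with h | h
      · exact ⟨false, by simpa [SwitchGraph.succ] using h⟩
      · exact ⟨true, by simpa [SwitchGraph.succ] using h⟩
    obtain ⟨b, hb⟩ := hb'
    have c1 := cnt_le_vis G o d v w N
    have c2 := vis_le_two_trav G o d w hwd b (N + 1)
    have c3 := trav_le_cnt G o d w w' b hb (N + 1)
    have c4 := ih w' hchain' hmin' w (N + 1)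
    have hp1 : 1 ≤ 2 ^ (k + 1) := Nat.one_le_two_pow
    have hp2 : 2 ^ (k + 1 + 1) = 2 * 2 ^ (k + 1) := by ring
    omega

end Aux

/-- A hopeful edge `(v, w)` of desperation `k` (shortest path from `w` to `d` has length `k`)
is traversed at most `2^(k+1) - 1` times by the run. -/
theorem stmt9 {V : Type} [Fintype V] [DecidableEq V] (G : SwitchGraph V) (o d : V)
    (v w : V) (k : ℕ) (hw : G.s0 v = w ∨ G.s1 v = w)
    (hchain : G.Chain w d k) (hmin : ∀ j < k, ¬ G.Chain w d j) (N : ℕ) :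
    (if G.s0 v = w then G.traversals o d N v false else 0) +
      (if G.s1 v = w then G.traversals o d N v true else 0) ≤ 2 ^ (k + 1) - 1 := by
  have hb : cntAux G o d v w N ≤ 2 ^ (k + 1) - 1 := main_bound G o d k w hchain hmin v N
  have hfalse : G.s0 v = w → G.traversals o d N v false ≤ cntAux G o d v w N :=
    fun h => trav_le_cnt G o d v w false (by simpa [SwitchGraph.succ] using h) N
  have htrue : G.s1 v = w → G.traversals o d N v true ≤ cntAux G o d v w N :=
    fun h => trav_le_cnt G o d v w true (by simpa [SwitchGraph.succ] using h) N
  by_cases h0 : G.s0 v = w <;> by_cases h1 : G.s1 v = w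
  · rw [if_pos h0, if_pos h1]
    have hsum : G.traversals o d N v false + G.traversals o d N v true ≤
        cntAux G o d v w N := by
      classical
      set A := (Finset.range N).filter
        (fun n => (G.run o d n).1 = v ∧ v ≠ d ∧ (G.run o d n).2 v = false) with hA
      set B := (Finset.range N).filter
        (fun n => (G.run o d n).1 = v ∧ v ≠ d ∧ (G.run o d n).2 v = true) with hB
      have hAcard : G.traversals o d N v false = A.card := rfl
      have hBcard : G.traversals o d N v true = B.card := rfl
      have hdis : Disjoint A B := by
        rw [Finset.disjoint_left]
        intro n hnA hnB
        rw [hA, Finset.mem_filter] at hnA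
        rw [hB, Finset.mem_filter] at hnB
        have := hnA.2.2.2
        rw [hnB.2.2.2] at this
        exact absurd this (by simp)
      have hsubA : A ⊆ (Finset.range N).filter
          (fun n => (G.run o d n).1 = v ∧ v ≠ d ∧ G.succ v ((G.run o d n).2 v) = w) := by
        intro n hn
        rw [hA, Finset.mem_filter] at hn
        rw [Finset.mem_filter]
        exact ⟨hn.1, hn.2.1, hn.2.2.1, by rw [hn.2.2.2]; simpa [SwitchGraph.succ] using h0⟩
      have hsubB : B ⊆ (Finset.range N).filter
          (fun n => (G.run o d n).1 = v ∧ v ≠ d ∧ G.succ v ((G.run o d n).2 v) = w) := by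
        intro n hn
        rw [hB, Finset.mem_filter] at hn
        rw [Finset.mem_filter]
        exact ⟨hn.1, hn.2.1, hn.2.2.1, by rw [hn.2.2.2]; simpa [SwitchGraph.succ] using h1⟩
      calc G.traversals o d N v false + G.traversals o d N v true
          = A.card + B.card := by rw [hAcard, hBcard]
        _ = (A ∪ B).card := (Finset.card_union_of_disjoint hdis).symm
        _ ≤ _ := Finset.card_le_card (Finset.union_subset hsubA hsubB)
    exact le_trans hsum hb
  · rw [if_pos h0, if_neg h1, Nat.add_zero]
    exact le_trans (hfalse h0) hb
  · rw [if_neg h0, if_pos h1, Nat.zero_add]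
    exact le_trans (htrue h1) hb
  · exact absurd hw (by tauto)
end

section
/- If the run from o to d does not terminate, then the run eventually reaches a dead end, i.e., a vertex from which no directed path to d exists in (V, E). -/
open scoped Classical

open SwitchGraph

/-- If the run does not terminate, it eventually reaches a dead end. -/
theorem stmt10 {V : Type} [Fintype V] [DecidableEq V] (G : SwitchGraph V) (o d : V)
    (hod : o ≠ d) (h : ¬ G.Terminates o d) :
    ∃ N, G.DeadEnd d (G.run o d N).1 := by
  classical
  set f : ℕ → V := fun n => (G.run o d n).1 with hfdef
  set g : ℕ → V → Bool := fun n => (G.run o d n).2 with hgdef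
  have hnd : ∀ n, f n ≠ d := fun n hn => h ⟨n, hn⟩
  have hrun : ∀ n, G.run o d (n+1) = G.step (G.run o d n) := by
    intro n
    show (fun p => if p.1 = d then p else G.step p)^[n+1] _ = _
    rw [Function.iterate_succ_apply']
    exact if_neg (hnd n)
  have hf : ∀ n, f (n+1) = G.succ (f n) (g n (f n)) := fun n => congrArg Prod.fst (hrun n)
  have hg : ∀ n v, g (n+1) v = if v = f n then !(g n (f n)) else g n v := by
    intro n v
    have h2 := congrArg Prod.snd (hrun n)
    show (G.run o d (n+1)).2 v = _
    rw [h2]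
    simp [SwitchGraph.step, Function.update_apply]
    rfl
  have hconst : ∀ (a m : ℕ) (v : V), (∀ k, a ≤ k → k < a + m → f k ≠ v) →
      g (a + m) v = g a v := by
    intro a m v
    induction m with
    | zero => intro _; rfl
    | succ m ih =>
      intro hk
      have h1 : g (a + m) v = g a v := ih (fun k hk1 hk2 => hk k hk1 (by omega))
      have he : a + (m+1) = (a+m)+1 := by omega
      rw [he, hg, if_neg, h1]
      intro hv
      exact hk (a+m) (by omega) (by omega) hv.symm
  set S : V → Prop := fun v => ∀ N, ∃ n, N ≤ n ∧ f n = v with hSdef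
  have hflip : ∀ v, S v → ∀ (b : Bool) (N : ℕ), ∃ n, N ≤ n ∧ f n = v ∧ g n v = b := by
    intro v hv b N
    obtain ⟨n₁, hn₁, hfn₁⟩ := hv N
    by_cases hb : g n₁ v = b
    · exact ⟨n₁, hn₁, hfn₁, hb⟩
    · have hex : ∃ m, f (n₁ + 1 + m) = v := by
        obtain ⟨n₂, hn₂, hfn₂⟩ := hv (n₁ + 1)
        exact ⟨n₂ - (n₁+1), by rw [show n₁+1+(n₂-(n₁+1)) = n₂ by omega]; exact hfn₂⟩
      set m := Nat.find hex with hm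
      refine ⟨n₁ + 1 + m, by omega, Nat.find_spec hex, ?_⟩
      have hmid : ∀ k, n₁ + 1 ≤ k → k < n₁ + 1 + m → f k ≠ v := by
        intro k h1 h2 hkv
        have hmin := Nat.find_min hex (m := k - (n₁+1)) (by omega)
        apply hmin
        rw [show n₁+1+(k-(n₁+1)) = k by omega]; exact hkv
      have h1 : g (n₁ + 1 + m) v = g (n₁ + 1) v := hconst (n₁+1) m v hmid
      have h2 : g (n₁ + 1) v = !(g n₁ v) := by
        rw [hg]; simp [hfn₁]
      rw [h1, h2]
      cases b <;> revert hb <;> cases (g n₁ v) <;> simp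
  have hclosed : ∀ v, S v → ∀ w, G.stepRel v w → S w := by
    intro v hv w hw N
    obtain ⟨b, hb⟩ : ∃ b : Bool, G.succ v b = w := by
      rcases hw with h0 | h1
      · exact ⟨false, by simpa [SwitchGraph.succ] using h0⟩
      · exact ⟨true, by simpa [SwitchGraph.succ] using h1⟩
    obtain ⟨n, hn, hfn, hgn⟩ := hflip v hv b N
    refine ⟨n+1, by omega, ?_⟩
    rw [hf, hfn, hgn, hb]
  obtain ⟨v, hv⟩ := Finite.exists_infinite_fiber f
  have hvS : S v := by
    intro N
    have hinf : (f ⁻¹' {v}).Infinite := Set.infinite_coe_iff.mp hv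
    obtain ⟨n, hn, hN⟩ := hinf.exists_gt N
    exact ⟨n, le_of_lt hN, hn⟩
  have key : ∀ w, Relation.ReflTransGen G.stepRel w d → S w → S d := by
    intro w hw
    induction hw using Relation.ReflTransGen.head_induction_on with
    | refl => exact id
    | head hab _ ih => intro ha; exact ih (hclosed _ ha _ hab)
  obtain ⟨n₀, _, hfn₀⟩ := hvS 0
  refine ⟨n₀, fun hpath => ?_⟩
  have hvS' : S (f n₀) := hfn₀ ▸ hvS
  have hdS : S d := key (f n₀) hpath hvS'
  obtain ⟨n, _, hn⟩ := hdS 0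
  exact hnd n hn
end
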